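/- If G is an SLC group with unique nonidentity commutator s, then s is central, s² = 1, and the map g* = g if g is central, g* = sg otherwise, is an involution (anti-automorphism of order 2) on G. -/

import Mathlib

open scoped Classical in
/-- The canonical involution on an SLC group: `g* = g` if `g` is central and
`g* = s g` otherwise. -/
noncomputable def canonicalInvolution {G : Type*} [Group G] (s : G) (g : G) : G :=
  if g ∈ Subgroup.center G then g else s * g

open scoped commutatorElement in
/-- in an SLC group with unique nonidentity commutator `s`, the
element `s` is central, `s² = 1`, and the canonical map is an involution
(anti-automorphism of order 2) on `G`. -/
theorem slc_canonical_involution {G : Type*} [Group G] (s : G) (hs1 : s ≠ 1)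
    (hex : ∃ g h : G, ⁅g, h⁆ = s)
    (huniq : ∀ g h : G, ⁅g, h⁆ = 1 ∨ ⁅g, h⁆ = s)
    (hLC : ∀ g h : G, g * h = h * g →
      g ∈ Subgroup.center G ∨ h ∈ Subgroup.center G ∨ g * h ∈ Subgroup.center G) :
    s ∈ Subgroup.center G ∧ s ^ 2 = 1 ∧
    (∀ g h : G, canonicalInvolution s (g * h) =
        canonicalInvolution s h * canonicalInvolution s g) ∧
    (∀ g : G, canonicalInvolution s (canonicalInvolution s g) = g) := by
  classical
  obtain ⟨a, b, hab⟩ := hex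
  have hscent : s ∈ Subgroup.center G := by
    rw [Subgroup.mem_center_iff]
    intro x
    have hc : ⁅x * a * x⁻¹, x * b * x⁻¹⁆ = x * s * x⁻¹ := by
      rw [← hab]; simp only [commutatorElement_def]; group
    rcases huniq (x * a * x⁻¹) (x * b * x⁻¹) with h | h
    · exfalso; apply hs1
      rw [hc] at h
      have : s = x⁻¹ * 1 * x := by rw [← h]; group
      simpa using this
    · rw [hc] at h
      calc x * s = (x * s * x⁻¹) * x := by group
      _ = s * x := by rw [h]
  have hsc : ∀ x : G, s * x = x * s := fun x =>
    (Subgroup.mem_center_iff.mp hscent x).symm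
  have hs2 : s ^ 2 = 1 := by
    rcases huniq b a with h | h
    · exfalso; apply hs1
      rw [← hab, ← commutatorElement_inv, h, inv_one]
    · have hinv : s⁻¹ = s := by rw [← hab, commutatorElement_inv, h, hab]
      calc s ^ 2 = s * s := sq s
      _ = s * s⁻¹ := by rw [hinv]
      _ = 1 := mul_inv_cancel s
  have hss : s * s = 1 := by rw [← sq]; exact hs2
  refine ⟨hscent, hs2, ?_, ?_⟩
  · intro g h
    by_cases hg : g ∈ Subgroup.center G
    · by_cases hh : h ∈ Subgroup.center G
      · have hgh : g * h ∈ Subgroup.center G := Subgroup.mul_mem _ hg hh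
        simp only [canonicalInvolution, if_pos hg, if_pos hh, if_pos hgh]
        exact Subgroup.mem_center_iff.mp hh g
      · have hgh : g * h ∉ Subgroup.center G := by
          intro hc
          exact hh (by simpa using Subgroup.mul_mem _ (Subgroup.inv_mem _ hg) hc)
        simp only [canonicalInvolution, if_pos hg, if_neg hh, if_neg hgh]
        rw [← Subgroup.mem_center_iff.mp hg h, ← mul_assoc]
    · by_cases hh : h ∈ Subgroup.center G
      · have hgh : g * h ∉ Subgroup.center G := by
          intro hc
          exact hg (by simpa using Subgroup.mul_mem _ hc (Subgroup.inv_mem _ hh))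
        simp only [canonicalInvolution, if_neg hg, if_pos hh, if_neg hgh]
        rw [← Subgroup.mem_center_iff.mp hh (s * g), mul_assoc]
      · by_cases hgh : g * h ∈ Subgroup.center G
        · simp only [canonicalInvolution, if_pos hgh, if_neg hg, if_neg hh]
          have h1 : g * (g * h) = g * (h * g) := by
            rw [Subgroup.mem_center_iff.mp hgh g]; group
          have hcomm : g * h = h * g := mul_left_cancel h1
          rw [hcomm, hsc h, mul_assoc h s, ← mul_assoc s s, hss, one_mul]
        · simp only [canonicalInvolution, if_neg hgh, if_neg hg, if_neg hh]
          have hne : ⁅g, h⁆ ≠ 1 := by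
            intro h1
            have hcomm : g * h = h * g := commutatorElement_eq_one_iff_mul_comm.mp h1
            rcases hLC g h hcomm with h' | h' | h'
            · exact hg h'
            · exact hh h'
            · exact hgh h'
          have hcs : ⁅g, h⁆ = s := (huniq g h).resolve_left hne
          have key : g * h = s * (h * g) := by rw [← hcs, commutatorElement_def]; group
          rw [key, ← mul_assoc, hss, one_mul, hsc h, mul_assoc h s, ← mul_assoc s s,
            hss, one_mul]
  · intro g
    by_cases hg : g ∈ Subgroup.center G
    · simp only [canonicalInvolution, if_pos hg]
    · have hsg : s * g ∉ Subgroup.center G := by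
        intro hc
        exact hg (by simpa using Subgroup.mul_mem _ (Subgroup.inv_mem _ hscent) hc)
      simp only [canonicalInvolution, if_neg hg, if_neg hsg]
      rw [← mul_assoc, hss, one_mul]
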